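/- For α ∈ (0,1) define g_α(t) = (2α/(1−α)) · ( cos t · (sin t)^{2α−1} − sin t · (cos t)^{2α−1} ) / ( (cos t)^{2α} + (sin t)^{2α} ) for t ∈ (0, π/2), with real powers. Then as t → 0⁺: (i) if 0 < α < 1/2, g_α(t) → +∞; (ii) if α = 1/2, g_α(t) → 2; (iii) if 1/2 < α < 1, g_α(t) → 0. -/

import Mathlib

open Filter

/-- **Instantaneous Rényi entanglement rate of the two-qubit toy model as `t → 0⁺`.**
With `g_α(t) = (2α/(1−α))·(cos t·(sin t)^{2α−1} − sin t·(cos t)^{2α−1})/((cos t)^{2α} +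
(sin t)^{2α})` on `(0, π/2)` (real powers): for `0 < α < 1/2` it tends to `+∞`; for
`α = 1/2` it tends to `2`; and for `1/2 < α < 1` it tends to `0`. -/
theorem stmt_19 (α : ℝ) (hα : α ∈ Set.Ioo (0 : ℝ) 1) :
    ((α < 1/2 → Tendsto (fun t : ℝ =>
        (2 * α / (1 - α)) *
          (Real.cos t * Real.sin t ^ (2 * α - 1) -
            Real.sin t * Real.cos t ^ (2 * α - 1)) /
          (Real.cos t ^ (2 * α) + Real.sin t ^ (2 * α)))
        (nhdsWithin 0 (Set.Ioo 0 (Real.pi / 2))) atTop) ∧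
     (α = 1/2 → Tendsto (fun t : ℝ =>
        (2 * α / (1 - α)) *
          (Real.cos t * Real.sin t ^ (2 * α - 1) -
            Real.sin t * Real.cos t ^ (2 * α - 1)) /
          (Real.cos t ^ (2 * α) + Real.sin t ^ (2 * α)))
        (nhdsWithin 0 (Set.Ioo 0 (Real.pi / 2))) (nhds 2)) ∧
     (1/2 < α → Tendsto (fun t : ℝ =>
        (2 * α / (1 - α)) *
          (Real.cos t * Real.sin t ^ (2 * α - 1) -
            Real.sin t * Real.cos t ^ (2 * α - 1)) /
          (Real.cos t ^ (2 * α) + Real.sin t ^ (2 * α)))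
        (nhdsWithin 0 (Set.Ioo 0 (Real.pi / 2))) (nhds 0))) := by
  obtain ⟨hα0, hα1⟩ := hα
  set L : Filter ℝ := nhdsWithin 0 (Set.Ioo 0 (Real.pi / 2)) with hL
  -- sin tends to 0 from within (0,∞)
  have hmem : ∀ᶠ t in L, t ∈ Set.Ioo 0 (Real.pi / 2) := self_mem_nhdsWithin
  have hsin0 : Tendsto Real.sin L (nhds 0) := by
    simpa using (Real.continuous_sin.tendsto 0).mono_left nhdsWithin_le_nhds
  have hsin : Tendsto Real.sin L (nhdsWithin 0 (Set.Ioi 0)) := by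
    rw [tendsto_nhdsWithin_iff]
    refine ⟨hsin0, hmem.mono fun t ht => ?_⟩
    exact Real.sin_pos_of_pos_of_lt_pi ht.1 (ht.2.trans_le (by linarith [Real.pi_pos]))
  have hcos : Tendsto Real.cos L (nhds 1) := by
    simpa using (Real.continuous_cos.tendsto 0).mono_left nhdsWithin_le_nhds
  -- cos t ^ c tends to 1 for any exponent c
  have hcospow : ∀ c : ℝ, Tendsto (fun t => Real.cos t ^ c) L (nhds 1) := by
    intro c
    have h1 : ContinuousAt (fun x : ℝ => x ^ c) 1 :=
      Real.continuousAt_rpow_const 1 c (Or.inl one_ne_zero)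
    have := h1.tendsto.comp hcos
    simpa [Function.comp_def, Real.one_rpow] using this
  -- sin t ^ c tends to 0 for positive exponent c
  have hsinpow : ∀ c : ℝ, 0 < c → Tendsto (fun t => Real.sin t ^ c) L (nhds 0) := by
    intro c hc
    have h0 : ContinuousAt (fun x : ℝ => x ^ c) 0 :=
      Real.continuousAt_rpow_const 0 c (Or.inr hc.le)
    have := h0.tendsto.comp hsin0
    simpa [Function.comp_def, Real.zero_rpow hc.ne'] using this
  -- denominator tends to 1
  have hden : Tendsto (fun t => Real.cos t ^ (2 * α) + Real.sin t ^ (2 * α)) L (nhds 1) := by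
    have := (hcospow (2 * α)).add (hsinpow (2 * α) (by linarith))
    simpa using this
  -- second numerator term tends to 0
  have hB : Tendsto (fun t => Real.sin t * Real.cos t ^ (2 * α - 1)) L (nhds 0) := by
    have := hsin0.mul (hcospow (2 * α - 1))
    simpa using this
  refine ⟨?_, ?_, ?_⟩
  · -- α < 1/2 : blows up
    intro hhalf
    have hexp : (0 : ℝ) < 1 - 2 * α := by linarith
    -- sin t ^ (2α - 1) → atTop
    have hS : Tendsto (fun t => Real.sin t ^ (2 * α - 1)) L atTop := by
      have hinv : Tendsto (fun t => (Real.sin t)⁻¹) L atTop :=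
        tendsto_inv_nhdsGT_zero.comp hsin
      have hrp : Tendsto (fun t => ((Real.sin t)⁻¹) ^ (1 - 2 * α)) L atTop :=
        (tendsto_rpow_atTop hexp).comp hinv
      refine hrp.congr' (hmem.mono fun t ht => ?_)
      have hst : 0 < Real.sin t :=
        Real.sin_pos_of_pos_of_lt_pi ht.1 (ht.2.trans_le (by linarith [Real.pi_pos]))
      show (Real.sin t)⁻¹ ^ (1 - 2 * α) = Real.sin t ^ (2 * α - 1)
      rw [Real.inv_rpow hst.le, ← Real.rpow_neg hst.le]
      ring_nf
    have hA : Tendsto (fun t => Real.cos t * Real.sin t ^ (2 * α - 1)) L atTop :=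
      hcos.pos_mul_atTop one_pos hS
    have hAB : Tendsto (fun t =>
        Real.cos t * Real.sin t ^ (2 * α - 1) -
          Real.sin t * Real.cos t ^ (2 * α - 1)) L atTop := by
      have := hA.atTop_add (hB.neg)
      simpa [sub_eq_add_neg] using this
    have hC : (0 : ℝ) < 2 * α / (1 - α) := by
      apply div_pos <;> linarith
    have hnum : Tendsto (fun t => (2 * α / (1 - α)) *
        (Real.cos t * Real.sin t ^ (2 * α - 1) -
          Real.sin t * Real.cos t ^ (2 * α - 1))) L atTop :=
      (tendsto_const_nhds (x := 2 * α / (1 - α))).pos_mul_atTop hC hAB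
    have hinvden : Tendsto (fun t =>
        (Real.cos t ^ (2 * α) + Real.sin t ^ (2 * α))⁻¹) L (nhds 1) := by
      simpa using hden.inv₀ one_ne_zero
    have := hnum.atTop_mul_pos one_pos hinvden
    simpa [div_eq_mul_inv] using this
  · -- α = 1/2 : tends to 2
    intro hhalf
    subst hhalf
    have heq : ∀ t : ℝ,
        (2 * (1/2 : ℝ) / (1 - 1/2)) *
          (Real.cos t * Real.sin t ^ (2 * (1/2 : ℝ) - 1) -
            Real.sin t * Real.cos t ^ (2 * (1/2 : ℝ) - 1))
          = 2 * (Real.cos t - Real.sin t) := by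
      intro t
      norm_num
    have hnum : Tendsto (fun t =>
        (2 * (1/2 : ℝ) / (1 - 1/2)) *
          (Real.cos t * Real.sin t ^ (2 * (1/2 : ℝ) - 1) -
            Real.sin t * Real.cos t ^ (2 * (1/2 : ℝ) - 1))) L (nhds 2) := by
      have h2 : Tendsto (fun t => 2 * (Real.cos t - Real.sin t)) L (nhds 2) := by
        have := (hcos.sub hsin0).const_mul (2 : ℝ)
        simpa using this
      exact h2.congr fun t => (heq t).symm
    have hden' : Tendsto (fun t =>
        Real.cos t ^ (2 * (1/2 : ℝ)) + Real.sin t ^ (2 * (1/2 : ℝ))) L (nhds 1) := hden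
    have := hnum.div hden' one_ne_zero
    simpa [Pi.div_def] using this
  · -- 1/2 < α : tends to 0
    intro hhalf
    have hS : Tendsto (fun t => Real.sin t ^ (2 * α - 1)) L (nhds 0) :=
      hsinpow (2 * α - 1) (by linarith)
    have hA : Tendsto (fun t => Real.cos t * Real.sin t ^ (2 * α - 1)) L (nhds 0) := by
      simpa using hcos.mul hS
    have hAB : Tendsto (fun t =>
        Real.cos t * Real.sin t ^ (2 * α - 1) -
          Real.sin t * Real.cos t ^ (2 * α - 1)) L (nhds 0) := by
      simpa using hA.sub hB
    have hnum := hAB.const_mul (2 * α / (1 - α))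
    have := hnum.div hden one_ne_zero
    simpa [Pi.div_def] using this
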